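/- For every subset S of K one has co_Φ(S) = K ∩ (δ^Φ)^{-1}( cl-co^{w*}(δ^Φ(S)) ), where cl-co^{w*}(δ^Φ(S)) denotes the weak*-closed convex hull of δ^Φ(S) in K(Φ). -/

import Mathlib

open MeasureTheory Set

section Defs

variable {K : Type*} [TopologicalSpace K] [CompactSpace K]

/-- The canonical injection `δ^Φ : K → Φ*`, `δ^Φ(x)(φ) = φ(x)`. -/
noncomputable def deltaPhi (Φ : Submodule ℝ C(K, ℝ)) (x : K) : WeakDual ℝ ↥Φ :=
  (ContinuousMap.evalCLM ℝ x).comp Φ.subtypeL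

/-- The set `K(Φ) = {Q ∈ Φ* : ‖Q‖ = Q(𝟏) = 1}`. -/
noncomputable def KPhi (Φ : Submodule ℝ C(K, ℝ))
    (h1 : ContinuousMap.const K (1 : ℝ) ∈ Φ) : Set (WeakDual ℝ ↥Φ) :=
  {Q | @Norm.norm (StrongDual ℝ Φ) (@ContinuousLinearMap.hasOpNorm ℝ ℝ Φ ℝ _ _ _ _ _ _ (RingHom.id ℝ))
      (WeakDual.toStrongDual Q) = 1 ∧ Q ⟨ContinuousMap.const K (1 : ℝ), h1⟩ = 1}

end Defs

section DefsTC

variable {K : Type*} [TopologicalSpace K] [CompactSpace K]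

/-- A closed set `C ⊆ K` is convex-trace w.r.t. `Φ` if `δ^Φ(C) = δ^Φ(K) ∩ Ĉ` for some
weak*-closed convex subset `Ĉ` of `K(Φ)`. -/
def TraceConvexSet (Φ : Submodule ℝ C(K, ℝ)) (h1 : ContinuousMap.const K (1 : ℝ) ∈ Φ)
    (C : Set K) : Prop :=
  IsClosed C ∧ ∃ Ch : Set (WeakDual ℝ ↥Φ), Ch ⊆ KPhi Φ h1 ∧ IsClosed Ch ∧ Convex ℝ Ch ∧
    deltaPhi Φ '' C = deltaPhi Φ '' Set.univ ∩ Ch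

end DefsTC

section DefsHull

variable {K : Type*} [TopologicalSpace K] [CompactSpace K]

/-- The `Φ`-trace convexification of `S`: the intersection of all convex-trace subsets of `K`
containing `S`. -/
def traceCoHull (Φ : Submodule ℝ C(K, ℝ)) (h1 : ContinuousMap.const K (1 : ℝ) ∈ Φ)
    (S : Set K) : Set K :=
  ⋂₀ {C : Set K | TraceConvexSet Φ h1 C ∧ S ⊆ C}

end DefsHull

section MyAux
variable {K : Type*} [TopologicalSpace K] [CompactSpace K]


instance quickCSMul (Φ : Submodule ℝ C(K, ℝ)) : ContinuousSMul ℝ (WeakDual ℝ ↥Φ) :=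
  WeakDual.instContinuousSMul ℝ

instance quickCAdd (Φ : Submodule ℝ C(K, ℝ)) : ContinuousAdd (WeakDual ℝ ↥Φ) :=
  WeakDual.instContinuousAdd ℝ ↥Φ

instance quickCCSMul (Φ : Submodule ℝ C(K, ℝ)) : ContinuousConstSMul ℝ (WeakDual ℝ ↥Φ) :=
  (quickCSMul Φ).continuousConstSMul

theorem myConvexClosure {E : Type*} [AddCommMonoid E] [Module ℝ E] [TopologicalSpace E]
    [ContinuousAdd E] [ContinuousConstSMul ℝ E] {s : Set E} (hs : Convex ℝ s) :
    Convex ℝ (closure s) := fun x hx y hy a b ha hb hab =>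
  show a • x + b • y ∈ closure s from
    map_mem_closure₂ (f := fun x' y' => a • x' + b • y')
      ((continuous_fst.const_smul a).add (continuous_snd.const_smul b)) hx hy
      fun _ hx' _ hy' => hs hx' hy' ha hb hab

lemma deltaPhi_continuous' (Φ : Submodule ℝ C(K, ℝ)) : Continuous (deltaPhi Φ) := by
  apply WeakDual.continuous_of_continuous_eval
  intro φ
  exact (map_continuous (φ : C(K, ℝ)))

variable (Φ : Submodule ℝ C(K, ℝ)) (h1 : ContinuousMap.const K (1 : ℝ) ∈ Φ)

lemma norm_one_elt [Nonempty K] : ‖(⟨ContinuousMap.const K (1 : ℝ), h1⟩ : Φ)‖ = 1 := by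
  have h : ‖(⟨ContinuousMap.const K (1 : ℝ), h1⟩ : Φ)‖ = ‖ContinuousMap.const K (1 : ℝ)‖ := rfl
  rw [h]
  apply le_antisymm
  · exact ContinuousMap.norm_le _ zero_le_one |>.mpr fun x => by simp
  · have := ContinuousMap.norm_coe_le_norm (ContinuousMap.const K (1 : ℝ)) (Classical.arbitrary K)
    simpa using this

/-- The "big" set: closed convex description of `KPhi`. -/
def BSet : Set (WeakDual ℝ ↥Φ) :=
  {Q | (∀ φ : Φ, |Q φ| ≤ ‖φ‖) ∧ Q ⟨ContinuousMap.const K (1 : ℝ), h1⟩ = 1}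

lemma KPhi_eq_BSet [Nonempty K] : KPhi Φ h1 = BSet Φ h1 := by
  ext Q
  constructor
  · rintro ⟨hn, he⟩
    refine ⟨fun φ => ?_, he⟩
    have := ContinuousLinearMap.le_opNorm (𝕜 := ℝ) (𝕜₂ := ℝ) (σ₁₂ := RingHom.id ℝ) (E := Φ) (F := ℝ) (WeakDual.toStrongDual Q) φ
    erw [hn, one_mul] at this
    exact this
  · rintro ⟨hb, he⟩
    refine ⟨le_antisymm ?_ ?_, he⟩
    · apply ContinuousLinearMap.opNorm_le_bound _ zero_le_one
      intro φ
      rw [one_mul]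
      exact hb φ
    · have := ContinuousLinearMap.le_opNorm (𝕜 := ℝ) (𝕜₂ := ℝ) (σ₁₂ := RingHom.id ℝ) (E := Φ) (F := ℝ) (WeakDual.toStrongDual Q) (⟨ContinuousMap.const K (1 : ℝ), h1⟩ : Φ)
      erw [norm_one_elt Φ h1, mul_one] at this
      calc (1:ℝ) = ‖Q ⟨ContinuousMap.const K (1 : ℝ), h1⟩‖ := by rw [he]; simp
        _ ≤ _ := this

lemma BSet_closed : IsClosed (BSet Φ h1) := by
  have h2 : IsClosed {Q : WeakDual ℝ ↥Φ | ∀ φ : Φ, |Q φ| ≤ ‖φ‖} := by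
    have h : {Q : WeakDual ℝ ↥Φ | ∀ φ : Φ, |Q φ| ≤ ‖φ‖}
        = ⋂ φ : Φ, {Q : WeakDual ℝ ↥Φ | |Q φ| ≤ ‖φ‖} := by
      ext Q; simp only [Set.mem_iInter, Set.mem_setOf_eq]
    rw [h]
    refine isClosed_iInter fun φ => ?_
    exact IsClosed.preimage ((WeakDual.eval_continuous φ).abs) isClosed_Iic
  have h3 : IsClosed {Q : WeakDual ℝ ↥Φ | Q ⟨ContinuousMap.const K (1 : ℝ), h1⟩ = 1} :=
    IsClosed.preimage (WeakDual.eval_continuous _) isClosed_singleton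
  exact h2.inter h3

lemma BSet_convex : Convex ℝ (BSet Φ h1) := by
  rintro Q₁ ⟨hb₁, he₁⟩ Q₂ ⟨hb₂, he₂⟩ a b ha hb hab
  have happ : ∀ φ : Φ, (a • Q₁ + b • Q₂) φ = a * Q₁ φ + b * Q₂ φ := fun φ => rfl
  constructor
  · intro φ
    rw [happ]
    calc |a * Q₁ φ + b * Q₂ φ| ≤ |a * Q₁ φ| + |b * Q₂ φ| := abs_add_le _ _
      _ = a * |Q₁ φ| + b * |Q₂ φ| := by rw [abs_mul, abs_mul, abs_of_nonneg ha, abs_of_nonneg hb]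
      _ ≤ a * ‖φ‖ + b * ‖φ‖ := by
          gcongr
          exacts [hb₁ φ, hb₂ φ]
      _ = ‖φ‖ := by rw [← add_mul, hab, one_mul]
  · rw [happ, he₁, he₂]; linarith

lemma deltaPhi_mem_BSet (x : K) : deltaPhi Φ x ∈ BSet Φ h1 := by
  constructor
  · intro φ
    have h : deltaPhi Φ x φ = (φ : C(K, ℝ)) x := rfl
    rw [h]
    have := ContinuousMap.norm_coe_le_norm (φ : C(K, ℝ)) x
    simpa [Real.norm_eq_abs] using this
  · rfl

end MyAux

/-- For every `S ⊆ K`: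
`co_Φ(S) = K ∩ (δ^Φ)⁻¹(weak*-closed convex hull of δ^Φ(S))`. -/
theorem stmt8 {K : Type*} [TopologicalSpace K] [CompactSpace K] [T2Space K]
    (Φ : Submodule ℝ C(K, ℝ)) (hΦclosed : IsClosed (Φ : Set C(K, ℝ)))
    (hsep : ∀ x y : K, x ≠ y → ∃ φ ∈ Φ, φ x ≠ φ y)
    (hconst : ∀ c : ℝ, ContinuousMap.const K c ∈ Φ)
    (S : Set K) :
    traceCoHull Φ (hconst 1) S =
      deltaPhi Φ ⁻¹' closure (convexHull ℝ (deltaPhi Φ '' S)) := by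
  rcases isEmpty_or_nonempty K with h | h
  · ext x; exact (IsEmpty.false x).elim
  set Ch := closure (convexHull ℝ (deltaPhi Φ '' S)) with hCh
  have h1 := hconst 1
  have hδS : deltaPhi Φ '' S ⊆ BSet Φ h1 := by
    rintro _ ⟨x, -, rfl⟩; exact deltaPhi_mem_BSet Φ h1 x
  have hChB : Ch ⊆ BSet Φ h1 :=
    closure_minimal (convexHull_min hδS (BSet_convex Φ h1)) (BSet_closed Φ h1)
  have hinj : Function.Injective (deltaPhi Φ) := by
    intro x y hxy
    by_contra hne
    obtain ⟨φ, hφ, hne'⟩ := hsep x y hne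
    have : deltaPhi Φ x ⟨φ, hφ⟩ = deltaPhi Φ y ⟨φ, hφ⟩ := by rw [hxy]
    exact hne' this
  have hD : TraceConvexSet Φ h1 (deltaPhi Φ ⁻¹' Ch) := by
    refine ⟨isClosed_closure.preimage (deltaPhi_continuous' Φ), Ch, ?_, isClosed_closure, ?_, ?_⟩
    · rw [KPhi_eq_BSet]; exact hChB
    · exact myConvexClosure (convex_convexHull ℝ _)
    · rw [Set.image_preimage_eq_inter_range, Set.image_univ, Set.inter_comm]
  apply subset_antisymm
  · intro x hx
    exact hx _ ⟨hD, fun s hs => subset_closure (subset_convexHull ℝ _ ⟨s, hs, rfl⟩)⟩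
  · intro x hx C hC
    obtain ⟨⟨hCcl, Chat, hChatK, hChatcl, hChatconv, heq⟩, hSC⟩ := hC
    have hsub : Ch ⊆ Chat := by
      apply closure_minimal (convexHull_min ?_ hChatconv) hChatcl
      rintro _ ⟨s, hs, rfl⟩
      have : deltaPhi Φ s ∈ deltaPhi Φ '' C := ⟨s, hSC hs, rfl⟩
      rw [heq] at this
      exact this.2
    have hmem : deltaPhi Φ x ∈ deltaPhi Φ '' C := by
      rw [heq]; exact ⟨⟨x, trivial, rfl⟩, hsub hx⟩
    obtain ⟨c, hc, hcx⟩ := hmem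
    exact (hinj hcx) ▸ hc
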